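/- Let f be a bounded holomorphic function on the open unit disk 𝔻 with |f(λ)| > 1 for all λ ∈ 𝔻. Then the kernel K(λ, z) = (1 − conj(f(λ))·f(z))² / (1 − conj(λ)·z)² is positive semi-definite on 𝔻. -/

import Mathlib

open Complex Metric ComplexOrder Topology Filter

/-- A kernel `K` on the open unit disk is positive semi-definite if for every finite
family of points in the disk and complex coefficients, the associated quadratic form
is a nonnegative real number (using the partial order on `ℂ`). -/
def IsPSDKernelOnDisk (K : ℂ → ℂ → ℂ) : Prop :=
  ∀ (n : ℕ) (lam : Fin n → ℂ), (∀ i, ‖lam i‖ < 1) →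
    ∀ c : Fin n → ℂ,
      0 ≤ ∑ i, ∑ j, (starRingEnd ℂ) (c i) * c j * K (lam i) (lam j)

lemma one_sub_ne {x : ℂ} (hx : ‖x‖ < 1) : 1 - x ≠ 0 := by
  intro h
  rw [sub_eq_zero] at h
  rw [← h] at hx
  simp at hx

lemma pairing_lemma {v : ℂ → ℂ} (hv : DifferentiableOn ℂ v (ball (0:ℂ) 1))
    {r : ℝ} (hr0 : 0 < r) (hr1 : r < 1) {b : ℂ} (hb : ‖b‖ < 1) :
    ∫ θ in (0:ℝ)..(2 * Real.pi),
        v (circleMap 0 r θ) * (starRingEnd ℂ) ((1 - (starRingEnd ℂ) b * circleMap 0 r θ)⁻¹)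
      = (2 * Real.pi) * v ((r:ℂ)^2 * b) := by
  have hw : (r:ℂ)^2 * b ∈ ball (0:ℂ) r := by
    simp only [mem_ball_zero_iff, norm_mul, norm_pow, Complex.norm_real, Real.norm_eq_abs,
      abs_of_pos hr0]
    calc r^2 * ‖b‖ ≤ r^2 * 1 := by
          nlinarith [norm_nonneg b, hb]
      _ < r := by nlinarith
  have hball : closedBall (0:ℂ) r ⊆ ball (0:ℂ) 1 := by
    intro z hz
    simp only [mem_closedBall_zero_iff] at hz
    exact mem_ball_zero_iff.mpr (lt_of_le_of_lt hz hr1)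
  have hd : DiffContOnCl ℂ v (ball (0:ℂ) r) := by
    constructor
    · exact hv.mono (ball_subset_ball hr1.le)
    · exact hv.continuousOn.mono (by rw [closure_ball (0:ℂ) hr0.ne']; exact hball)
  have key := hd.circleIntegral_sub_inv_smul hw
  rw [circleIntegral] at key
  have h2 : ∫ θ in (0:ℝ)..(2 * Real.pi),
      v (circleMap 0 r θ) * (starRingEnd ℂ) ((1 - (starRingEnd ℂ) b * circleMap 0 r θ)⁻¹)
      = (-I) * ∫ θ in (0:ℝ)..(2 * Real.pi),
          deriv (circleMap 0 r) θ •
            ((circleMap 0 r θ - (r:ℂ)^2*b)⁻¹ • v (circleMap 0 r θ)) := by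
    rw [← intervalIntegral.integral_const_mul]
    apply intervalIntegral.integral_congr
    intro θ _
    set z := circleMap 0 r θ with hzdef
    have hz0 : z ≠ 0 := circleMap_ne_center hr0.ne'
    have habs : ‖z‖ = r := by
      rw [hzdef, norm_circleMap_zero]; exact abs_of_pos hr0
    have hconjz : (starRingEnd ℂ) z = (r:ℂ)^2 * z⁻¹ := by
      field_simp
      rw [mul_comm]
      rw [Complex.mul_conj]
      rw [Complex.normSq_eq_norm_sq, habs]
      norm_num
    have hzw : z - (r:ℂ)^2*b ≠ 0 := by
      intro h
      rw [sub_eq_zero] at h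
      have : ‖z‖ = ‖(r:ℂ)^2*b‖ := by rw [h]
      rw [habs] at this
      simp only [norm_mul, norm_pow, Complex.norm_real, Real.norm_eq_abs, abs_of_pos hr0] at this
      nlinarith [norm_nonneg b]
    have hden : 1 - (starRingEnd ℂ) b * z ≠ 0 := by
      apply one_sub_ne
      rw [norm_mul]
      simp only [Complex.norm_conj, habs]
      nlinarith [norm_nonneg b]
    simp only [deriv_circleMap, ← hzdef, map_inv₀, map_sub, map_one, map_mul,
      RingHom.id_apply, starRingEnd_self_apply, hconjz, smul_eq_mul]
    field_simp
    ring_nf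
    simp only [Complex.I_sq]
    have hinv : (z - (r:ℂ)^2*b) * (z - (r:ℂ)^2*b)⁻¹ = 1 := mul_inv_cancel₀ hzw
    ring
  rw [h2, key, smul_eq_mul]
  have : (-I) * (2 * ↑Real.pi * I * v ((r:ℂ)^2*b)) = (↑(2 * Real.pi) : ℂ) * v ((r:ℂ)^2*b) := by
    push_cast
    ring_nf
    simp only [Complex.I_sq]
    ring
  rw [this]
  push_cast
  ring

lemma circ_mem {r : ℝ} (hr0 : 0 < r) (hr1 : r < 1) (θ : ℝ) : circleMap 0 r θ ∈ ball (0:ℂ) 1 := by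
  simp only [mem_ball_zero_iff, norm_circleMap_zero]
  rw [abs_of_pos hr0]; exact hr1

lemma den_ne {b : ℂ} (hb : ‖b‖ < 1) {z : ℂ} (hz : z ∈ ball (0:ℂ) 1) :
    1 - (starRingEnd ℂ) b * z ≠ 0 := by
  apply one_sub_ne
  rw [norm_mul, Complex.norm_conj]
  simp only [mem_ball_zero_iff] at hz
  nlinarith [norm_nonneg b, norm_nonneg z]

lemma cont_den {b : ℂ} (hb : ‖b‖ < 1) {r : ℝ} (hr0 : 0 < r) (hr1 : r < 1) :
    Continuous fun θ : ℝ => ((1 : ℂ) - (starRingEnd ℂ) b * circleMap 0 r θ)⁻¹ := by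
  apply Continuous.inv₀
  · continuity
  · exact fun θ => den_ne hb (circ_mem hr0 hr1 θ)

lemma sum_pairing {n : ℕ} (lam : Fin n → ℂ) (hlam : ∀ i, ‖lam i‖ < 1)
    (d : Fin n → ℂ) {v : ℂ → ℂ} (hv : DifferentiableOn ℂ v (ball (0:ℂ) 1))
    {r : ℝ} (hr0 : 0 < r) (hr1 : r < 1) :
    ∫ θ in (0:ℝ)..(2 * Real.pi),
        v (circleMap 0 r θ) *
          (starRingEnd ℂ) (∑ i, d i * (1 - (starRingEnd ℂ) (lam i) * circleMap 0 r θ)⁻¹)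
      = (2 * Real.pi) * ∑ i, (starRingEnd ℂ) (d i) * v ((r:ℂ)^2 * lam i) := by
  have hvc : Continuous fun θ : ℝ => v (circleMap 0 r θ) :=
    hv.continuousOn.comp_continuous (continuous_circleMap 0 r) (circ_mem hr0 hr1)
  have h1 : ∀ θ : ℝ, v (circleMap 0 r θ) *
        (starRingEnd ℂ) (∑ i, d i * (1 - (starRingEnd ℂ) (lam i) * circleMap 0 r θ)⁻¹)
      = ∑ i, (starRingEnd ℂ) (d i) *
          (v (circleMap 0 r θ) * (starRingEnd ℂ) ((1 - (starRingEnd ℂ) (lam i) * circleMap 0 r θ)⁻¹)) := by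
    intro θ
    rw [map_sum, Finset.mul_sum]
    refine Finset.sum_congr rfl fun i _ => ?_
    rw [map_mul]; ring
  simp only [h1]
  rw [intervalIntegral.integral_finset_sum]
  · rw [Finset.mul_sum]
    refine Finset.sum_congr rfl fun i _ => ?_
    rw [intervalIntegral.integral_const_mul, pairing_lemma hv hr0 hr1 (hlam i)]
    ring
  · intro i _
    apply Continuous.intervalIntegrable
    exact continuous_const.mul (hvc.mul ((Complex.continuous_conj).comp (cont_den (hlam i) hr0 hr1)))

lemma integral_cs {T : ℝ} (hT : 0 ≤ T) {a b : ℝ → ℝ} (ha : Continuous a) (hb : Continuous b) :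
    (∫ θ in (0:ℝ)..T, a θ * b θ)^2 ≤ (∫ θ in (0:ℝ)..T, a θ^2) * (∫ θ in (0:ℝ)..T, b θ^2) := by
  set A := ∫ θ in (0:ℝ)..T, a θ^2 with hA
  set B := ∫ θ in (0:ℝ)..T, a θ * b θ with hB
  set C := ∫ θ in (0:ℝ)..T, b θ^2 with hC
  have key : ∀ t : ℝ, 0 ≤ A * (t * t) + (2*B) * t + C := by
    intro t
    have h2 : 0 ≤ ∫ θ in (0:ℝ)..T, (t * a θ + b θ)^2 :=
      intervalIntegral.integral_nonneg hT fun x _ => sq_nonneg _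
    have h3 : (∫ θ in (0:ℝ)..T, (t * a θ + b θ)^2)
        = t^2 * A + (2*t) * B + C := by
      rw [hA, hB, hC]
      rw [← intervalIntegral.integral_const_mul, ← intervalIntegral.integral_const_mul,
        ← intervalIntegral.integral_add, ← intervalIntegral.integral_add]
      · apply intervalIntegral.integral_congr
        intro θ _; dsimp; ring
      · exact ((continuous_const.mul (ha.pow 2)).add
          (continuous_const.mul (ha.mul hb))).intervalIntegrable _ _
      · exact (hb.pow 2).intervalIntegrable _ _
      · exact (continuous_const.mul (ha.pow 2)).intervalIntegrable _ _
      · exact (continuous_const.mul (ha.mul hb)).intervalIntegrable _ _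
    rw [h3] at h2
    nlinarith
  have hd := discrim_le_zero (a := A) (b := 2*B) (c := C) key
  rw [discrim] at hd
  nlinarith

theorem pick_psd (f : ℂ → ℂ) (hf : DifferentiableOn ℂ f (ball (0 : ℂ) 1))
    (hgt : ∀ lam ∈ ball (0 : ℂ) 1, 1 < ‖f lam‖)
    {n : ℕ} (lam : Fin n → ℂ) (hlam : ∀ i, ‖lam i‖ < 1) (c : Fin n → ℂ) :
    0 ≤ ∑ i, ∑ j, (starRingEnd ℂ) (c i) * c j *
        (((starRingEnd ℂ) (f (lam i)) * f (lam j) - 1) / (1 - (starRingEnd ℂ) (lam i) * lam j)) := by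
  have hmem : ∀ i, lam i ∈ ball (0:ℂ) 1 := by
    intro i; simpa [mem_ball_zero_iff] using hlam i
  have hfne : ∀ z ∈ ball (0:ℂ) 1, f z ≠ 0 := by
    intro z hz h0
    have := hgt z hz; rw [h0] at this; simp at this; linarith
  set d : Fin n → ℂ := fun i => (starRingEnd ℂ) (c i) with hd
  set h : ℂ → ℂ := fun z => ∑ j, d j * (1 - (starRingEnd ℂ) (lam j) * z)⁻¹ with hhdef
  set u : ℂ → ℂ := fun z => ∑ j, (d j * (starRingEnd ℂ) (f (lam j))) *
      (1 - (starRingEnd ℂ) (lam j) * z)⁻¹ with hudef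
  set w : ℂ → ℂ := fun z => h z * (f z)⁻¹ with hwdef
  -- differentiability
  have hdiff_den : ∀ (b : ℂ), ‖b‖ < 1 → DifferentiableOn ℂ
      (fun z : ℂ => ((1:ℂ) - (starRingEnd ℂ) b * z)⁻¹) (ball (0:ℂ) 1) := by
    intro b hb
    apply DifferentiableOn.inv
    · exact (differentiable_const (1:ℂ)).differentiableOn.sub
        ((differentiable_id.const_mul _).differentiableOn)
    · intro z hz; exact den_ne hb hz
  have hh : DifferentiableOn ℂ h (ball (0:ℂ) 1) := by
    apply DifferentiableOn.fun_sum
    intro j _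
    exact (hdiff_den (lam j) (hlam j)).const_mul _
  have hu : DifferentiableOn ℂ u (ball (0:ℂ) 1) := by
    apply DifferentiableOn.fun_sum
    intro j _
    exact (hdiff_den (lam j) (hlam j)).const_mul _
  have hw : DifferentiableOn ℂ w (ball (0:ℂ) 1) := hh.mul (hf.inv hfne)
  -- continuity on circles
  have hcont : ∀ (v : ℂ → ℂ), DifferentiableOn ℂ v (ball (0:ℂ) 1) →
      ∀ {r : ℝ}, 0 < r → r < 1 → Continuous fun θ : ℝ => v (circleMap 0 r θ) := by
    intro v hv r hr0 hr1
    exact hv.continuousOn.comp_continuous (continuous_circleMap 0 r) (circ_mem hr0 hr1)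
  -- the integral quantities
  set Pr : ℝ → ℝ := fun r => ∫ θ in (0:ℝ)..(2*Real.pi), ‖h (circleMap 0 r θ)‖^2 with hPrdef
  set Ur : ℝ → ℝ := fun r => ∫ θ in (0:ℝ)..(2*Real.pi), ‖u (circleMap 0 r θ)‖^2 with hUrdef
  set Sr : ℝ → ℂ := fun r => ∫ θ in (0:ℝ)..(2*Real.pi),
      w (circleMap 0 r θ) * (starRingEnd ℂ) (u (circleMap 0 r θ)) with hSrdef
  have habs_sq : ∀ (v : ℂ → ℂ) (z : ℂ), ((‖v z‖^2 : ℝ) : ℂ) = v z * (starRingEnd ℂ) (v z) := by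
    intro v z
    rw [Complex.mul_conj, Complex.normSq_eq_norm_sq]
  -- identity for Pr
  have hPr : ∀ r ∈ Set.Ioo (0:ℝ) 1,
      ((Pr r : ℝ) : ℂ) = (2 * Real.pi) * ∑ i, (starRingEnd ℂ) (d i) * h ((r:ℂ)^2 * lam i) := by
    intro r hr
    rw [hPrdef]
    rw [← intervalIntegral.integral_ofReal]
    rw [← sum_pairing lam hlam d hh hr.1 hr.2]
    apply intervalIntegral.integral_congr
    intro θ _
    exact habs_sq h (circleMap 0 r θ)
  have hUr : ∀ r ∈ Set.Ioo (0:ℝ) 1,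
      ((Ur r : ℝ) : ℂ) = (2 * Real.pi) * ∑ i, ((starRingEnd ℂ) (d i) * f (lam i)) * u ((r:ℂ)^2 * lam i) := by
    intro r hr
    rw [hUrdef]
    rw [← intervalIntegral.integral_ofReal]
    have := sum_pairing lam hlam (fun i => d i * (starRingEnd ℂ) (f (lam i))) hu hr.1 hr.2
    rw [show (∑ i, (starRingEnd ℂ) (d i * (starRingEnd ℂ) (f (lam i))) * u ((r:ℂ)^2 * lam i))
        = ∑ i, ((starRingEnd ℂ) (d i) * f (lam i)) * u ((r:ℂ)^2 * lam i) from
      Finset.sum_congr rfl fun i _ => by simp [map_mul]] at this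
    rw [← this]
    apply intervalIntegral.integral_congr
    intro θ _
    exact habs_sq u (circleMap 0 r θ)
  have hSr : ∀ r ∈ Set.Ioo (0:ℝ) 1,
      Sr r = (2 * Real.pi) * ∑ i, ((starRingEnd ℂ) (d i) * f (lam i)) * w ((r:ℂ)^2 * lam i) := by
    intro r hr
    rw [hSrdef]
    have := sum_pairing lam hlam (fun i => d i * (starRingEnd ℂ) (f (lam i))) hw hr.1 hr.2
    rw [show (∑ i, (starRingEnd ℂ) (d i * (starRingEnd ℂ) (f (lam i))) * w ((r:ℂ)^2 * lam i))
        = ∑ i, ((starRingEnd ℂ) (d i) * f (lam i)) * w ((r:ℂ)^2 * lam i) from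
      Finset.sum_congr rfl fun i _ => by simp [map_mul]] at this
    exact this
  -- the inequality at radius r
  have hineq : ∀ r ∈ Set.Ioo (0:ℝ) 1, ‖Sr r‖^2 ≤ Pr r * Ur r := by
    intro r hr
    have hwc := hcont w hw hr.1 hr.2
    have huc := hcont u hu hr.1 hr.2
    have hhc := hcont h hh hr.1 hr.2
    have h2pi : (0:ℝ) ≤ 2 * Real.pi := by positivity
    have step1 : ‖Sr r‖ ≤ ∫ θ in (0:ℝ)..(2*Real.pi), ‖w (circleMap 0 r θ)‖ * ‖u (circleMap 0 r θ)‖ := by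
      refine le_trans (intervalIntegral.norm_integral_le_integral_norm h2pi) ?_
      apply le_of_eq
      apply intervalIntegral.integral_congr
      intro θ _
      simp [norm_mul]
    have step2 : (∫ θ in (0:ℝ)..(2*Real.pi), ‖w (circleMap 0 r θ)‖ * ‖u (circleMap 0 r θ)‖)^2
        ≤ (∫ θ in (0:ℝ)..(2*Real.pi), ‖w (circleMap 0 r θ)‖^2) *
          (∫ θ in (0:ℝ)..(2*Real.pi), ‖u (circleMap 0 r θ)‖^2) :=
      integral_cs h2pi hwc.norm huc.norm
    have step3 : (∫ θ in (0:ℝ)..(2*Real.pi), ‖w (circleMap 0 r θ)‖^2) ≤ Pr r := by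
      rw [hPrdef]
      apply intervalIntegral.integral_mono_on h2pi
        ((hwc.norm.pow 2).intervalIntegrable _ _) ((hhc.norm.pow 2).intervalIntegrable _ _)
      intro θ _
      have hz := circ_mem hr.1 hr.2 θ
      have h1f : 1 < ‖f (circleMap 0 r θ)‖ := hgt _ hz
      rw [hwdef]
      simp only [norm_mul, norm_inv]
      have h0 : (0:ℝ) ≤ ‖h (circleMap 0 r θ)‖ := norm_nonneg _
      have : ‖h (circleMap 0 r θ)‖ * (‖f (circleMap 0 r θ)‖)⁻¹
          ≤ ‖h (circleMap 0 r θ)‖ := by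
        apply mul_le_of_le_one_right h0
        rw [inv_le_one_iff₀]
        right; linarith
      exact pow_le_pow_left₀ (mul_nonneg h0 (inv_nonneg.2 (norm_nonneg _))) this 2
    have hur_nonneg : 0 ≤ ∫ θ in (0:ℝ)..(2*Real.pi), ‖u (circleMap 0 r θ)‖^2 :=
      intervalIntegral.integral_nonneg h2pi fun x _ => sq_nonneg _
    have hnorm_nonneg : (0:ℝ) ≤ ∫ θ in (0:ℝ)..(2*Real.pi), ‖w (circleMap 0 r θ)‖ * ‖u (circleMap 0 r θ)‖ :=
      intervalIntegral.integral_nonneg h2pi fun x _ => mul_nonneg (norm_nonneg _) (norm_nonneg _)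
    calc ‖Sr r‖^2 ≤ (∫ θ in (0:ℝ)..(2*Real.pi), ‖w (circleMap 0 r θ)‖ * ‖u (circleMap 0 r θ)‖)^2 := by
          apply pow_le_pow_left₀ (norm_nonneg _) step1
      _ ≤ (∫ θ in (0:ℝ)..(2*Real.pi), ‖w (circleMap 0 r θ)‖^2) *
          (∫ θ in (0:ℝ)..(2*Real.pi), ‖u (circleMap 0 r θ)‖^2) := step2
      _ ≤ Pr r * Ur r := by
          apply mul_le_mul_of_nonneg_right step3 hur_nonneg
  -- limits as r → 1⁻
  set l : Filter ℝ := nhdsWithin 1 (Set.Iio 1) with hldef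
  have hlne : l.NeBot := by rw [hldef]; infer_instance
  have hev : ∀ᶠ r in l, r ∈ Set.Ioo (0:ℝ) 1 := by
    have h0 : ∀ᶠ r in 𝓝 (1:ℝ), 0 < r := eventually_gt_nhds zero_lt_one
    filter_upwards [h0.filter_mono nhdsWithin_le_nhds, eventually_mem_nhdsWithin] with r hr0 hr1
    exact ⟨hr0, hr1⟩
  have hpath : ∀ i, Filter.Tendsto (fun r : ℝ => ((r:ℂ))^2 * lam i) l
      (nhdsWithin (lam i) (ball (0:ℂ) 1)) := by
    intro i
    rw [tendsto_nhdsWithin_iff]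
    constructor
    · have hcont2 : Continuous fun r : ℝ => ((r:ℂ))^2 * lam i :=
        (Complex.continuous_ofReal.pow 2).mul continuous_const
      have h3 := hcont2.tendsto 1
      simp only [Complex.ofReal_one, one_pow, one_mul] at h3
      exact h3.mono_left nhdsWithin_le_nhds
    · filter_upwards [hev] with r hr
      simp only [mem_ball_zero_iff, norm_mul, norm_pow, Complex.norm_real, Real.norm_eq_abs]
      rw [abs_of_pos hr.1]
      have h4 := hlam i
      nlinarith [norm_nonneg (lam i), hr.1, hr.2]
  have hlim : ∀ (v : ℂ → ℂ), DifferentiableOn ℂ v (ball (0:ℂ) 1) → ∀ i,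
      Filter.Tendsto (fun r : ℝ => v (((r:ℂ))^2 * lam i)) l (𝓝 (v (lam i))) := by
    intro v hv i
    exact ((hv.continuousOn.continuousWithinAt (hmem i)).tendsto).comp (hpath i)
  set Pc : ℂ := ∑ i, (starRingEnd ℂ) (d i) * h (lam i) with hPc
  set Uc : ℂ := ∑ i, ((starRingEnd ℂ) (d i) * f (lam i)) * u (lam i) with hUc
  have TP : Filter.Tendsto (fun r => ((Pr r : ℝ) : ℂ)) l (𝓝 ((2 * Real.pi) * Pc)) := by
    apply Filter.Tendsto.congr' (hev.mono fun r hr => (hPr r hr).symm)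
    exact tendsto_const_nhds.mul
      (tendsto_finset_sum _ fun i _ => tendsto_const_nhds.mul (hlim h hh i))
  have TU : Filter.Tendsto (fun r => ((Ur r : ℝ) : ℂ)) l (𝓝 ((2 * Real.pi) * Uc)) := by
    apply Filter.Tendsto.congr' (hev.mono fun r hr => (hUr r hr).symm)
    exact tendsto_const_nhds.mul
      (tendsto_finset_sum _ fun i _ => tendsto_const_nhds.mul (hlim u hu i))
  have hScPc : (∑ i, ((starRingEnd ℂ) (d i) * f (lam i)) * w (lam i)) = Pc := by
    rw [hPc]
    apply Finset.sum_congr rfl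
    intro i _
    simp only [hwdef]
    have hne := hfne (lam i) (hmem i)
    field_simp
  have TS : Filter.Tendsto Sr l (𝓝 ((2 * Real.pi) * Pc)) := by
    apply Filter.Tendsto.congr' (hev.mono fun r hr => (hSr r hr).symm)
    rw [← hScPc]
    exact tendsto_const_nhds.mul
      (tendsto_finset_sum _ fun i _ => tendsto_const_nhds.mul (hlim w hw i))
  -- realness and nonnegativity of limits
  have hPim : (2 * (Real.pi:ℂ) * Pc).im = 0 := by
    have h1 := (Complex.continuous_im.tendsto _).comp TP
    have h2 : ((fun z : ℂ => z.im) ∘ fun r => ((Pr r : ℝ) : ℂ)) = fun _ => (0:ℝ) :=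
      funext fun r => Complex.ofReal_im _
    rw [h2] at h1
    exact tendsto_nhds_unique h1 tendsto_const_nhds
  have hUim : (2 * (Real.pi:ℂ) * Uc).im = 0 := by
    have h1 := (Complex.continuous_im.tendsto _).comp TU
    have h2 : ((fun z : ℂ => z.im) ∘ fun r => ((Ur r : ℝ) : ℂ)) = fun _ => (0:ℝ) :=
      funext fun r => Complex.ofReal_im _
    rw [h2] at h1
    exact tendsto_nhds_unique h1 tendsto_const_nhds
  have TPre : Filter.Tendsto Pr l (𝓝 ((2 * (Real.pi:ℂ) * Pc).re)) := by
    have h1 := (Complex.continuous_re.tendsto _).comp TP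
    have h2 : ((fun z : ℂ => z.re) ∘ fun r => ((Pr r : ℝ) : ℂ)) = Pr :=
      funext fun r => Complex.ofReal_re _
    rwa [h2] at h1
  have TUre : Filter.Tendsto Ur l (𝓝 ((2 * (Real.pi:ℂ) * Uc).re)) := by
    have h1 := (Complex.continuous_re.tendsto _).comp TU
    have h2 : ((fun z : ℂ => z.re) ∘ fun r => ((Ur r : ℝ) : ℂ)) = Ur :=
      funext fun r => Complex.ofReal_re _
    rwa [h2] at h1
  have hPre : 0 ≤ (2 * (Real.pi:ℂ) * Pc).re := by
    apply ge_of_tendsto TPre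
    apply Filter.Eventually.of_forall
    intro r
    exact intervalIntegral.integral_nonneg (by positivity) fun x _ => sq_nonneg _
  have hUre : 0 ≤ (2 * (Real.pi:ℂ) * Uc).re := by
    apply ge_of_tendsto TUre
    apply Filter.Eventually.of_forall
    intro r
    exact intervalIntegral.integral_nonneg (by positivity) fun x _ => sq_nonneg _
  -- pass to the limit in the inequality
  have key : ‖(2 * (Real.pi:ℂ) * Pc)‖^2
      ≤ (2 * (Real.pi:ℂ) * Pc).re * (2 * (Real.pi:ℂ) * Uc).re := by
    have TL : Filter.Tendsto (fun r => ‖Sr r‖^2) l (𝓝 (‖(2 * (Real.pi:ℂ) * Pc)‖^2)) :=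
      TS.norm.pow 2
    have TR : Filter.Tendsto (fun r => Pr r * Ur r) l
        (𝓝 ((2 * (Real.pi:ℂ) * Pc).re * (2 * (Real.pi:ℂ) * Uc).re)) := TPre.mul TUre
    exact le_of_tendsto_of_tendsto TL TR (hev.mono fun r hr => hineq r hr)
  have habs2 : ‖(2 * (Real.pi:ℂ) * Pc)‖^2 = (2 * (Real.pi:ℂ) * Pc).re^2 := by
    rw [Complex.sq_norm, Complex.normSq_apply, hPim]
    ring
  have hre_le : (2 * (Real.pi:ℂ) * Pc).re ≤ (2 * (Real.pi:ℂ) * Uc).re := by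
    nlinarith [key, habs2, hPre, hUre]
  -- descale by 2π
  have h2pi : (0:ℝ) < 2 * Real.pi := by positivity
  have hPim' : Pc.im = 0 := by
    have : (2 * (Real.pi:ℂ) * Pc).im = (2 * Real.pi) * Pc.im := by
      simp [Complex.mul_im]
    rw [this] at hPim
    rcases mul_eq_zero.mp hPim with h9 | h9
    · exfalso; nlinarith [Real.pi_pos]
    · exact h9
  have hUim' : Uc.im = 0 := by
    have e : (2 * (Real.pi:ℂ) * Uc).im = (2 * Real.pi) * Uc.im := by
      simp [Complex.mul_im]
    rw [e] at hUim
    rcases mul_eq_zero.mp hUim with h9 | h9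
    · exfalso; nlinarith [Real.pi_pos]
    · exact h9
  have hre' : Pc.re ≤ Uc.re := by
    have e1 : (2 * (Real.pi:ℂ) * Pc).re = (2 * Real.pi) * Pc.re := by
      simp [Complex.mul_re]
    have e2 : (2 * (Real.pi:ℂ) * Uc).re = (2 * Real.pi) * Uc.re := by
      simp [Complex.mul_re]
    rw [e1, e2] at hre_le
    nlinarith [hre_le, h2pi]
  have hform : (∑ i, ∑ j, (starRingEnd ℂ) (c i) * c j *
        (((starRingEnd ℂ) (f (lam i)) * f (lam j) - 1) / (1 - (starRingEnd ℂ) (lam i) * lam j)))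
      = Uc - Pc := by
    rw [Finset.sum_comm, hUc, hPc, ← Finset.sum_sub_distrib]
    apply Finset.sum_congr rfl
    intro i _
    simp only [hudef, hhdef]
    rw [Finset.mul_sum, Finset.mul_sum, ← Finset.sum_sub_distrib]
    apply Finset.sum_congr rfl
    intro j _
    rw [hd]
    simp only [Complex.conj_conj]
    rw [div_eq_mul_inv]
    ring
  rw [hform, Complex.le_def]
  constructor
  · simp only [Complex.zero_re, Complex.sub_re]
    linarith
  · simp only [Complex.zero_im, Complex.sub_im, hPim', hUim']
    ring

/-- If `f` is bounded holomorphic on the unit disk with `|f| > 1`, then the kernel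
`(1 - conj (f λ) * f z)² / (1 - conj λ * z)²` is positive semi-definite. -/
theorem psd_of_inverse_schur_class
    (f : ℂ → ℂ) (hf : DifferentiableOn ℂ f (ball (0 : ℂ) 1))
    (hb : ∃ M : ℝ, ∀ z ∈ ball (0 : ℂ) 1, ‖f z‖ ≤ M)
    (hgt : ∀ lam ∈ ball (0 : ℂ) 1, 1 < ‖f lam‖) :
    IsPSDKernelOnDisk (fun lam z =>
        (1 - (starRingEnd ℂ) (f lam) * f z) ^ 2 / (1 - (starRingEnd ℂ) lam * z) ^ 2) := by
  intro n lam hlam c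
  set M : Matrix (Fin n) (Fin n) ℂ := Matrix.of fun i j =>
    ((starRingEnd ℂ) (f (lam i)) * f (lam j) - 1) / (1 - (starRingEnd ℂ) (lam i) * lam j)
    with hM
  have hMpsd : M.PosSemidef := by
    refine Matrix.posSemidef_iff_dotProduct_mulVec.mpr ⟨?_, ?_⟩
    · ext i j
      simp only [hM, Matrix.conjTranspose_apply, Matrix.of_apply, star_def, map_div₀, map_sub,
        map_one, map_mul, Complex.conj_conj]
      ring
    · intro x
      have := pick_psd f hf hgt lam hlam x
      calc (0:ℂ) ≤ ∑ i, ∑ j, (starRingEnd ℂ) (x i) * x j *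
            (((starRingEnd ℂ) (f (lam i)) * f (lam j) - 1) /
              (1 - (starRingEnd ℂ) (lam i) * lam j)) := this
        _ = dotProduct (star x) (M.mulVec x) := by
            simp only [dotProduct, Matrix.mulVec, Pi.star_apply, star_def, hM,
              Matrix.of_apply, Finset.mul_sum]
            apply Finset.sum_congr rfl
            intro i _
            apply Finset.sum_congr rfl
            intro j _
            ring
  obtain ⟨B, hB⟩ : ∃ B : Matrix (Fin n) (Fin n) ℂ, M = B.conjTranspose * B := by
    open scoped MatrixOrder in
    obtain ⟨X, hX, -, hXM⟩ := CFC.exists_sqrt_of_isSelfAdjoint_of_quasispectrumRestricts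
      hMpsd.isHermitian (QuasispectrumRestricts.nnreal_of_nonneg hMpsd.nonneg)
    exact ⟨X, by rw [← Matrix.star_eq_conjTranspose, hX.star_eq]; simpa using hXM.symm⟩
  have hMentry : ∀ i j, M i j = ∑ k, (starRingEnd ℂ) (B k i) * B k j := by
    intro i j
    rw [hB]
    simp [Matrix.mul_apply, Matrix.conjTranspose_apply, star_def]
  have hK : ∀ i j, (1 - (starRingEnd ℂ) (f (lam i)) * f (lam j)) ^ 2 /
      (1 - (starRingEnd ℂ) (lam i) * lam j) ^ 2 = M i j * M i j := by
    intro i j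
    rw [hM]
    simp only [Matrix.of_apply]
    rw [div_mul_div_comm, ← pow_two, ← pow_two]
    congr 1
    ring
  simp only [hK]
  have expand : ∑ i, ∑ j, (starRingEnd ℂ) (c i) * c j * (M i j * M i j)
      = ∑ k, ∑ l, (starRingEnd ℂ) (∑ i, c i * B k i * B l i) * (∑ j, c j * B k j * B l j) := by
    have e1 : ∀ i j, (starRingEnd ℂ) (c i) * c j * (M i j * M i j)
        = ∑ k, ∑ l, ((starRingEnd ℂ) (c i * B k i * B l i)) * (c j * B k j * B l j) := by
      intro i j
      rw [hMentry i j, Finset.sum_mul_sum]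
      rw [Finset.mul_sum]
      apply Finset.sum_congr rfl
      intro k _
      rw [Finset.mul_sum]
      apply Finset.sum_congr rfl
      intro l _
      simp only [map_mul]
      ring
    simp only [e1]
    rw [show (∑ k, ∑ l, (starRingEnd ℂ) (∑ i, c i * B k i * B l i) * (∑ j, c j * B k j * B l j))
        = ∑ k, ∑ l, ∑ i, ∑ j, ((starRingEnd ℂ) (c i * B k i * B l i)) * (c j * B k j * B l j) by
      apply Finset.sum_congr rfl; intro k _
      apply Finset.sum_congr rfl; intro l _
      rw [map_sum, Finset.sum_mul_sum]]
    calc (∑ i, ∑ j, ∑ k, ∑ l, ((starRingEnd ℂ) (c i * B k i * B l i)) * (c j * B k j * B l j))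
        = ∑ i, ∑ k, ∑ j, ∑ l, ((starRingEnd ℂ) (c i * B k i * B l i)) * (c j * B k j * B l j) :=
          Finset.sum_congr rfl fun i _ => Finset.sum_comm
      _ = ∑ k, ∑ i, ∑ j, ∑ l, ((starRingEnd ℂ) (c i * B k i * B l i)) * (c j * B k j * B l j) :=
          Finset.sum_comm
      _ = ∑ k, ∑ i, ∑ l, ∑ j, ((starRingEnd ℂ) (c i * B k i * B l i)) * (c j * B k j * B l j) :=
          Finset.sum_congr rfl fun k _ => Finset.sum_congr rfl fun i _ => Finset.sum_comm
      _ = ∑ k, ∑ l, ∑ i, ∑ j, ((starRingEnd ℂ) (c i * B k i * B l i)) * (c j * B k j * B l j) :=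
          Finset.sum_congr rfl fun k _ => Finset.sum_comm
  rw [expand]
  apply Finset.sum_nonneg
  intro k _
  apply Finset.sum_nonneg
  intro l _
  exact star_mul_self_nonneg _
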